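/- Let P = {x ∈ [0,1]^n : a·x = b} be a nonempty subset-sum polytope and let x̃ ∈ {0,1}^n be a stalling point (AltProj(x̃) = x̃) with a·x̃ > b. Then there exists a coordinate k with x̃_k = 1 such that the ℓ1 projection x̄ = ℓ1-proj(P, x̃) satisfies x̄ᵢ = x̃ᵢ for all i ≠ k and x̄_k ∈ [1/2, 1). -/

import Mathlib

open Finset

private lemma one_frac_aux {n : ℕ} (a : Fin n → ℝ) (ha : ∀ i, 0 < a i) (b : ℝ)
    (xb : Fin n → ℝ) (hmem : ∀ i, 0 ≤ xb i ∧ xb i ≤ 1)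
    (hsum : ∑ i, a i * xb i = b)
    (hext : ∀ y, ((∀ i, 0 ≤ y i ∧ y i ≤ 1) ∧ ∑ i, a i * y i = b) →
      ∀ z, ((∀ i, 0 ≤ z i ∧ z i ≤ 1) ∧ ∑ i, a i * z i = b) →
      xb ∈ openSegment ℝ y z → y = xb ∧ z = xb)
    (i j : Fin n) (hij : i ≠ j)
    (hi0 : 0 < xb i) (hi1 : xb i < 1) (hj0 : 0 < xb j) (hj1 : xb j < 1) : False := by
  set m := min (min (xb i) (1 - xb i)) (min (xb j) (1 - xb j)) with hm
  have hmpos : 0 < m := lt_min (lt_min hi0 (by linarith)) (lt_min hj0 (by linarith))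
  have hapos : 0 < a i + a j := by have := ha i; have := ha j; linarith
  set ε : ℝ := m / (a i + a j) with hε
  have hεpos : 0 < ε := div_pos hmpos hapos
  have hεj : ε * a j ≤ m := by
    rw [hε, div_mul_eq_mul_div, div_le_iff₀ hapos]
    nlinarith [hmpos.le, (ha i).le]
  have hεi : ε * a i ≤ m := by
    rw [hε, div_mul_eq_mul_div, div_le_iff₀ hapos]
    nlinarith [hmpos.le, (ha j).le]
  have hm1 : m ≤ xb i := le_trans (min_le_left _ _) (min_le_left _ _)
  have hm2 : m ≤ 1 - xb i := le_trans (min_le_left _ _) (min_le_right _ _)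
  have hm3 : m ≤ xb j := le_trans (min_le_right _ _) (min_le_left _ _)
  have hm4 : m ≤ 1 - xb j := le_trans (min_le_right _ _) (min_le_right _ _)
  have hsum' : ∀ w : ℝ, (∑ l, a l *
      (if l = i then xb i + w * a j else if l = j then xb j - w * a i else xb l)) = b := by
    intro w
    have hcong : ∀ l, a l * (if l = i then xb i + w * a j
          else if l = j then xb j - w * a i else xb l)
        = a l * xb l + ((if l = i then a i * (w * a j) else 0)
          + (if l = j then -(a j * (w * a i)) else 0)) := by
      intro l
      by_cases h1 : l = i
      · subst h1
        have : l ≠ j := hij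
        simp [this]; ring
      · by_cases h2 : l = j
        · subst h2; simp [h1]; ring
        · simp [h1, h2]
    rw [Finset.sum_congr rfl (fun l _ => hcong l), Finset.sum_add_distrib,
      Finset.sum_add_distrib, Finset.sum_ite_eq' Finset.univ i,
      Finset.sum_ite_eq' Finset.univ j, hsum]
    simp; ring
  have hεjpos : 0 < ε * a j := mul_pos hεpos (ha j)
  have hεipos : 0 < ε * a i := mul_pos hεpos (ha i)
  set y : Fin n → ℝ := fun l => if l = i then xb i + ε * a j
      else if l = j then xb j - ε * a i else xb l with hy
  set z : Fin n → ℝ := fun l => if l = i then xb i + (-ε) * a j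
      else if l = j then xb j - (-ε) * a i else xb l with hz
  have hymem : ∀ l, 0 ≤ y l ∧ y l ≤ 1 := by
    intro l
    rcases hmem l with ⟨h0, h1⟩
    by_cases h1' : l = i
    · subst h1'; simp [hy, hij]
      constructor <;> nlinarith [(hmem l).1, (hmem l).2]
    · by_cases h2 : l = j
      · subst h2; simp [hy, h1']
        constructor <;> nlinarith [(hmem l).1, (hmem l).2]
      · simp [hy, h1', h2]; exact ⟨h0, h1⟩
  have hzmem : ∀ l, 0 ≤ z l ∧ z l ≤ 1 := by
    intro l
    rcases hmem l with ⟨h0, h1⟩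
    by_cases h1' : l = i
    · subst h1'; simp [hz, hij]
      constructor <;> nlinarith [(hmem l).1, (hmem l).2]
    · by_cases h2 : l = j
      · subst h2; simp [hz, h1']
        constructor <;> nlinarith [(hmem l).1, (hmem l).2]
      · simp [hz, h1', h2]; exact ⟨h0, h1⟩
  have hseg : xb ∈ openSegment ℝ y z := by
    refine ⟨1/2, 1/2, by norm_num, by norm_num, by norm_num, ?_⟩
    funext l
    by_cases h1 : l = i
    · subst h1; simp [hy, hz, hij]; ring
    · by_cases h2 : l = j
      · subst h2; simp [hy, hz, h1]; ring
      · simp [hy, hz, h1, h2]; ring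
  obtain ⟨hyeq, -⟩ := hext y ⟨hymem, hsum' ε⟩ z ⟨hzmem, hsum' (-ε)⟩ hseg
  have : y i = xb i := by rw [hyeq]
  simp [hy] at this
  rcases this with h | h
  · exact absurd h hεpos.ne'
  · exact absurd h (ha j).ne'

/-- Claim 1 (second part): for a stalling point `x̃` of a subset-sum polytope
with `a·x̃ > b`, the ℓ1 projection `x̄` agrees with `x̃` except in one
coordinate `k ∈ supp(x̃)`, where `x̄_k ∈ [1/2, 1)`. -/
theorem stalling_above (n : ℕ) (a : Fin n → ℝ) (b : ℝ) (ha : ∀ i, 0 < a i)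
    (P : Set (Fin n → ℝ))
    (hP : P = {x | (∀ i, 0 ≤ x i ∧ x i ≤ 1) ∧ ∑ i, a i * x i = b})
    (hne : P.Nonempty)
    (xt : Fin n → ℝ) (hxt : ∀ i, xt i = 0 ∨ xt i = 1)
    (hgt : b < ∑ i, a i * xt i)
    (xb : Fin n → ℝ) (hxbv : xb ∈ Set.extremePoints ℝ P)
    (hmin : ∀ x ∈ P, ∑ i, |xt i - xb i| ≤ ∑ i, |xt i - x i|)
    (hstall : ∀ i, ((⌊xb i + 1/2⌋ : ℤ) : ℝ) = xt i) :
    ∃ k, xt k = 1 ∧ (∀ i, i ≠ k → xb i = xt i) ∧ 1/2 ≤ xb k ∧ xb k < 1 := by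
  subst hP
  obtain ⟨⟨hmem, hsum⟩, hext⟩ := hxbv
  -- bounds from the stalling condition
  have hhalf : ∀ i, (xt i = 0 → xb i < 1/2) ∧ (xt i = 1 → 1/2 ≤ xb i) := by
    intro i
    constructor
    · intro h0
      have hfl : ⌊xb i + 1/2⌋ = (0 : ℤ) := by
        have := hstall i; rw [h0] at this; exact_mod_cast this
      have := Int.floor_eq_iff.mp hfl
      push_cast at this
      linarith [this.2]
    · intro h1
      have hfl : ⌊xb i + 1/2⌋ = (1 : ℤ) := by
        have := hstall i; rw [h1] at this; exact_mod_cast this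
      have := Int.floor_eq_iff.mp hfl
      push_cast at this
      linarith [this.1]
  -- every differing coordinate is fractional
  have hfrac : ∀ i, xb i ≠ xt i → 0 < xb i ∧ xb i < 1 := by
    intro i hne'
    rcases hxt i with h0 | h1
    · rw [h0] at hne'
      have := (hhalf i).1 h0
      exact ⟨lt_of_le_of_ne (hmem i).1 (Ne.symm hne'), by linarith⟩
    · rw [h1] at hne'
      have := (hhalf i).2 h1
      exact ⟨by linarith, lt_of_le_of_ne (hmem i).2 hne'⟩
  -- there is a differing coordinate
  have hdiff : ∃ k, xb k ≠ xt k := by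
    by_contra h
    push_neg at h
    have : (∑ i, a i * xb i) = ∑ i, a i * xt i :=
      Finset.sum_congr rfl (fun i _ => by rw [h i])
    rw [hsum] at this
    linarith
  obtain ⟨k, hk⟩ := hdiff
  -- uniqueness of the differing coordinate
  have huniq : ∀ i, i ≠ k → xb i = xt i := by
    intro i hik
    by_contra hi
    obtain ⟨hi0, hi1⟩ := hfrac i hi
    obtain ⟨hk0, hk1⟩ := hfrac k hk
    exact one_frac_aux a ha b xb hmem hsum (fun y hy z hz hs => ⟨hext hy hz hs, hext hz hy (by rw [openSegment_symm]; exact hs)⟩) i k hik hi0 hi1 hk0 hk1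
  -- sum comparison forces xb k < xt k
  have hsumdiff : (∑ i, a i * xb i) - ∑ i, a i * xt i = a k * (xb k - xt k) := by
    rw [← Finset.sum_sub_distrib]
    rw [Finset.sum_eq_single k]
    · ring
    · intro i _ hik
      rw [huniq i hik]; ring
    · intro h; exact absurd (Finset.mem_univ k) h
  rw [hsum] at hsumdiff
  have hlt : xb k < xt k := by
    have h1 : a k * (xb k - xt k) < 0 := by linarith
    nlinarith [ha k]
  have hxtk : xt k = 1 := by
    rcases hxt k with h0 | h1
    · exfalso; rw [h0] at hlt; linarith [(hmem k).1]
    · exact h1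
  refine ⟨k, hxtk, huniq, (hhalf k).2 hxtk, ?_⟩
  rw [hxtk] at hlt; exact hlt
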